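/- Let n ≥ 1, let j ∈ {1,…,n}, and let v be an n-dimensional unit vector all of whose entries lie in ℤ[1/2]. Then there exist finitely many generators G₁, …, G_ℓ, each taken from the set {(-1)_[a], X_[a,b], (H⊗H)_[a,b,c,d] : a, b, c, d distinct elements of {1,…,n}}, such that G₁ ⋯ G_ℓ v = e_j, the j-th standard basis vector. -/

import Mathlib

open Matrix Complex

noncomputable section

/-- The `m`-level operator of type `W` with indices `f 0, …, f (m-1)`:
for injective `f`, its `(f j', f k')` entry is `W j' k'` and it agrees
with the identity matrix elsewhere. -/
def levelOp {n m : ℕ} (f : Fin m → Fin n) (W : Matrix (Fin m) (Fin m) ℂ) :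
    Matrix (Fin n) (Fin n) ℂ := fun j k =>
  (∑ j' : Fin m, ∑ k' : Fin m, if f j' = j ∧ f k' = k then W j' k' else 0) +
  (if j = k ∧ ∀ j' : Fin m, f j' ≠ j then 1 else 0)

/-- The NOT gate `X`. -/
def Xmat : Matrix (Fin 2) (Fin 2) ℂ := !![0, 1; 1, 0]

/-- The Hadamard gate `H`. -/
def Hmat : Matrix (Fin 2) (Fin 2) ℂ := (Real.sqrt 2 : ℂ)⁻¹ • !![1, 1; 1, -1]

/-- The Kronecker product `H ⊗ H`, a 4×4 matrix. -/
def HHmat : Matrix (Fin 4) (Fin 4) ℂ :=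
  (2 : ℂ)⁻¹ • !![1, 1, 1, 1; 1, -1, 1, -1; 1, 1, -1, -1; 1, -1, -1, 1]

/-- `G` is one of the generators `(-1)_[a]`, `X_[a,b]`, `(H⊗H)_[a,b,c,d]`
with `a, b, c, d` distinct. -/
def IsIntGen {n : ℕ} (G : Matrix (Fin n) (Fin n) ℂ) : Prop :=
  (∃ a : Fin n, G = levelOp ![a] !![-1]) ∨
  (∃ a b : Fin n, a ≠ b ∧ G = levelOp ![a, b] Xmat) ∨
  (∃ a b c d : Fin n, a ≠ b ∧ a ≠ c ∧ a ≠ d ∧ b ≠ c ∧ b ≠ d ∧ c ≠ d ∧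
    G = levelOp ![a, b, c, d] HHmat)

/-- `x` is a dyadic fraction: an element of `ℤ[1/2]` (viewed inside `ℂ`). -/
def IsDyadic (x : ℂ) : Prop := ∃ (u : ℤ) (q : ℕ), x = (u : ℂ) / 2 ^ q


section Aux
variable {n : ℕ}

lemma levelOp_mulVec {n m : ℕ} (f : Fin m → Fin n)
    (W : Matrix (Fin m) (Fin m) ℂ) (w : Fin n → ℂ) (j : Fin n) :
    (levelOp f W).mulVec w j =
      (∑ j' : Fin m, ∑ k' : Fin m, if f j' = j then W j' k' * w (f k') else 0) +
      (if ∀ j' : Fin m, f j' ≠ j then w j else 0) := by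
  simp only [Matrix.mulVec, dotProduct, levelOp]
  have : ∀ k : Fin n,
      ((∑ j' : Fin m, ∑ k' : Fin m, if f j' = j ∧ f k' = k then W j' k' else 0) +
        (if j = k ∧ ∀ j' : Fin m, f j' ≠ j then 1 else 0)) * w k
      = (∑ j' : Fin m, ∑ k' : Fin m, if f k' = k then (if f j' = j then W j' k' * w (f k') else 0) else 0) +
        (if j = k then (if ∀ j' : Fin m, f j' ≠ j then w j else 0) else 0) := by
    intro k
    rw [add_mul, Finset.sum_mul]
    congr 1
    · refine Finset.sum_congr rfl fun j' _ => ?_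
      rw [Finset.sum_mul]
      refine Finset.sum_congr rfl fun k' _ => ?_
      by_cases h1 : f j' = j <;> by_cases h2 : f k' = k <;> simp [h1, h2]
    · by_cases h1 : j = k <;> by_cases h2 : ∀ j' : Fin m, f j' ≠ j <;> simp [h1, h2]
  rw [Finset.sum_congr rfl fun k _ => this k, Finset.sum_add_distrib]
  congr 1
  · rw [Finset.sum_comm]
    refine Finset.sum_congr rfl fun j' _ => ?_
    rw [Finset.sum_comm]
    refine Finset.sum_congr rfl fun k' _ => ?_
    simp
  · simp

lemma neg_mulVec {n : ℕ} (a : Fin n) (w : Fin n → ℂ) :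
    (levelOp ![a] !![(-1 : ℂ)]).mulVec w = fun k => if k = a then -w a else w k := by
  funext k
  rw [levelOp_mulVec]
  by_cases h : k = a
  · subst h
    simp [Fin.sum_univ_succ, Fin.forall_fin_succ, Matrix.cons_val_zero, Matrix.cons_val_one, Matrix.cons_val_succ, Matrix.head_cons]
  · simp [Fin.sum_univ_succ, Fin.forall_fin_succ, Matrix.cons_val_zero, Matrix.cons_val_one, Matrix.cons_val_succ, Matrix.head_cons, Ne.symm h, h]

lemma X_mulVec {n : ℕ} (a b : Fin n) (hab : a ≠ b) (w : Fin n → ℂ) :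
    (levelOp ![a, b] Xmat).mulVec w =
      fun k => if k = a then w b else if k = b then w a else w k := by
  funext k
  rw [levelOp_mulVec]
  by_cases h1 : k = a
  · subst h1
    simp [Fin.sum_univ_succ, Fin.forall_fin_succ, Matrix.cons_val_zero, Matrix.cons_val_one, Matrix.cons_val_succ, Matrix.head_cons, Xmat, hab, Ne.symm hab]
  · by_cases h2 : k = b
    · subst h2
      simp [Fin.sum_univ_succ, Fin.forall_fin_succ, Matrix.cons_val_zero, Matrix.cons_val_one, Matrix.cons_val_succ, Matrix.head_cons, Xmat, hab, Ne.symm hab, h1]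
    · simp [Fin.sum_univ_succ, Fin.forall_fin_succ, Matrix.cons_val_zero, Matrix.cons_val_one, Matrix.cons_val_succ, Matrix.head_cons, Ne.symm h1, Ne.symm h2, h1, h2]

lemma HH_mulVec {n : ℕ} (a b c d : Fin n) (hab : a ≠ b) (hac : a ≠ c) (had : a ≠ d)
    (hbc : b ≠ c) (hbd : b ≠ d) (hcd : c ≠ d) (w : Fin n → ℂ) :
    (levelOp ![a, b, c, d] HHmat).mulVec w = fun k =>
      if k = a then (w a + w b + w c + w d) / 2
      else if k = b then (w a - w b + w c - w d) / 2
      else if k = c then (w a + w b - w c - w d) / 2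
      else if k = d then (w a - w b - w c + w d) / 2
      else w k := by
  funext k
  rw [levelOp_mulVec]
  by_cases h1 : k = a
  · subst h1
    simp [Fin.sum_univ_succ, Fin.forall_fin_succ, Matrix.cons_val_zero, Matrix.cons_val_one, Matrix.cons_val_succ, Matrix.head_cons, HHmat, hab, hac, had, Ne.symm hab, Ne.symm hac, Ne.symm had]
    ring
  · by_cases h2 : k = b
    · subst h2
      simp [Fin.sum_univ_succ, Fin.forall_fin_succ, Matrix.cons_val_zero, Matrix.cons_val_one, Matrix.cons_val_succ, Matrix.head_cons, HHmat, hab, hbc, hbd, Ne.symm hab, Ne.symm hbc, Ne.symm hbd, h1]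
      ring
    · by_cases h3 : k = c
      · subst h3
        simp [Fin.sum_univ_succ, Fin.forall_fin_succ, Matrix.cons_val_zero, Matrix.cons_val_one, Matrix.cons_val_succ, Matrix.head_cons, HHmat, hac, hbc, hcd, Ne.symm hac, Ne.symm hbc, Ne.symm hcd, h1, h2]
        ring
      · by_cases h4 : k = d
        · subst h4
          simp [Fin.sum_univ_succ, Fin.forall_fin_succ, Matrix.cons_val_zero, Matrix.cons_val_one, Matrix.cons_val_succ, Matrix.head_cons, HHmat, had, hbd, hcd, Ne.symm had, Ne.symm hbd, Ne.symm hcd, h1, h2, h3]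
          ring
        · simp [Fin.sum_univ_succ, Fin.forall_fin_succ, Matrix.cons_val_zero, Matrix.cons_val_one, Matrix.cons_val_succ, Matrix.head_cons, Ne.symm h1, Ne.symm h2, Ne.symm h3, Ne.symm h4, h1, h2, h3, h4]

def Reaches {n : ℕ} (v w : Fin n → ℂ) : Prop :=
  ∃ L : List (Matrix (Fin n) (Fin n) ℂ),
    (∀ G ∈ L, IsIntGen G) ∧ L.prod.mulVec v = w

lemma reaches_refl {n : ℕ} (v : Fin n → ℂ) : Reaches v v :=
  ⟨[], by simp, by simp [Matrix.one_mulVec]⟩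

lemma reaches_trans {n : ℕ} {v w x : Fin n → ℂ} (h1 : Reaches v w) (h2 : Reaches w x) :
    Reaches v x := by
  obtain ⟨L1, hL1, hv1⟩ := h1
  obtain ⟨L2, hL2, hv2⟩ := h2
  refine ⟨L2 ++ L1, ?_, ?_⟩
  · intro G hG; rcases List.mem_append.1 hG with h | h
    exacts [hL2 G h, hL1 G h]
  · rw [List.prod_append, ← Matrix.mulVec_mulVec, hv1, hv2]

lemma reaches_gen {n : ℕ} {G : Matrix (Fin n) (Fin n) ℂ} (hG : IsIntGen G)
    {v w : Fin n → ℂ} (h : G.mulVec v = w) : Reaches v w :=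
  ⟨[G], by simpa using hG, by simpa using h⟩

lemma reaches_neg {n : ℕ} (a : Fin n) (v : Fin n → ℂ) :
    Reaches v (fun k => if k = a then -v a else v k) :=
  reaches_gen (Or.inl ⟨a, rfl⟩) (neg_mulVec a v)

lemma reaches_X {n : ℕ} (a b : Fin n) (hab : a ≠ b) (v : Fin n → ℂ) :
    Reaches v (fun k => if k = a then v b else if k = b then v a else v k) :=
  reaches_gen (Or.inr (Or.inl ⟨a, b, hab, rfl⟩)) (X_mulVec a b hab v)

lemma reaches_HH {n : ℕ} (a b c d : Fin n) (hab : a ≠ b) (hac : a ≠ c) (had : a ≠ d)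
    (hbc : b ≠ c) (hbd : b ≠ d) (hcd : c ≠ d) (v : Fin n → ℂ) :
    Reaches v (fun k =>
      if k = a then (v a + v b + v c + v d) / 2
      else if k = b then (v a - v b + v c - v d) / 2
      else if k = c then (v a + v b - v c - v d) / 2
      else if k = d then (v a - v b - v c + v d) / 2
      else v k) :=
  reaches_gen (Or.inr (Or.inr ⟨a, b, c, d, hab, hac, had, hbc, hbd, hcd, rfl⟩))
    (HH_mulVec a b c d hab hac had hbc hbd hcd v)

/-- Base case: integer unit vector reaches e_j. -/
lemma base_case {n : ℕ} (j : Fin n) (u : Fin n → ℤ) (h : ∑ k, (u k)^2 = 1) :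
    Reaches (fun k => ((u k : ℂ))) (fun k => if k = j then 1 else 0) := by
  -- find the support index
  have hex : ∃ k₀, u k₀ ≠ 0 := by
    by_contra h0
    push_neg at h0
    simp [h0] at h
  obtain ⟨k₀, hk₀⟩ := hex
  have hnn : ∀ i ∈ Finset.univ, (0:ℤ) ≤ (u i)^2 := fun i _ => sq_nonneg _
  have hle : (u k₀)^2 ≤ 1 := h ▸ Finset.single_le_sum hnn (Finset.mem_univ k₀)
  have hge : 1 ≤ (u k₀)^2 := by
    have := hk₀
    nlinarith [sq_nonneg (u k₀), Int.one_le_abs (by exact hk₀ : u k₀ ≠ 0), _root_.sq_abs (u k₀)]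
  have hsq : (u k₀)^2 = 1 := le_antisymm hle hge
  have hrest : ∀ k, k ≠ k₀ → u k = 0 := by
    intro k hk
    have hsplit : ∑ i, (u i)^2 = (u k₀)^2 + ∑ i ∈ Finset.univ.erase k₀, (u i)^2 :=
      (Finset.add_sum_erase Finset.univ (fun i => (u i)^2) (Finset.mem_univ k₀)).symm
    rw [hsplit, hsq] at h
    have h0 : ∑ i ∈ Finset.univ.erase k₀, (u i)^2 = 0 := by linarith
    have := (Finset.sum_eq_zero_iff_of_nonneg (fun i _ => sq_nonneg (u i))).1 h0 k
      (Finset.mem_erase.2 ⟨hk, Finset.mem_univ k⟩)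
    exact pow_eq_zero_iff (by norm_num) |>.1 this
  have hval : u k₀ = 1 ∨ u k₀ = -1 := by
    rcases Int.isUnit_iff.1 (IsUnit.of_mul_eq_one (a := u k₀) (u k₀) (by nlinarith)) with h1 | h1
    · exact Or.inl h1
    · exact Or.inr h1
  -- current vector is (±1) e_{k₀}
  have hvec : (fun k => ((u k : ℂ))) = fun k => if k = k₀ then ((u k₀ : ℂ)) else 0 := by
    funext k
    by_cases hk : k = k₀
    · simp [hk]
    · simp [hk, hrest k hk]
  rw [hvec]
  -- step 1: fix sign to get e_{k₀}
  have step1 : Reaches (fun k => if k = k₀ then ((u k₀ : ℂ)) else 0)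
      (fun k => if k = k₀ then 1 else 0) := by
    rcases hval with h1 | h1
    · rw [h1]; push_cast; exact reaches_refl _
    · have := reaches_neg k₀ (fun k => if k = k₀ then ((u k₀ : ℂ)) else 0)
      simp only [if_pos rfl] at this
      convert this using 2 with k
      by_cases hk : k = k₀ <;> simp [hk, h1]
  refine reaches_trans step1 ?_
  -- step 2: swap k₀ and j if needed
  by_cases hkj : k₀ = j
  · subst hkj; exact reaches_refl _
  · have := reaches_X k₀ j hkj (fun k => if k = k₀ then 1 else 0)
    convert this using 2 with k
    by_cases hk : k = k₀ <;> by_cases hkj' : k = j <;>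
      simp_all [Ne.symm hkj]

lemma odd_sq_zmod4 {x : ℤ} (h : Odd x) : ((x : ZMod 4))^2 = 1 := by
  obtain ⟨m, hm⟩ := h
  subst hm
  push_cast
  have : ∀ y : ZMod 4, (2*y+1)^2 = 1 := by decide
  exact this _

lemma even_sq_zmod4 {x : ℤ} (h : ¬ Odd x) : ((x : ZMod 4))^2 = 0 := by
  rw [Int.not_odd_iff_even] at h
  obtain ⟨m, hm⟩ := h
  subst hm
  push_cast
  have : ∀ y : ZMod 4, (y+y)^2 = 0 := by decide
  exact this _

lemma card_odd_dvd (q : ℕ) (u : Fin n → ℤ) (h : ∑ k, (u k)^2 = 4^(q+1)) :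
    4 ∣ (Finset.univ.filter (fun k => Odd (u k))).card := by
  have hcast : ((∑ k, (u k)^2 : ℤ) : ZMod 4) =
      ((Finset.univ.filter (fun k => Odd (u k))).card : ZMod 4) := by
    push_cast
    rw [Finset.card_filter]
    push_cast
    refine Finset.sum_congr rfl fun k _ => ?_
    by_cases hk : Odd (u k)
    · rw [odd_sq_zmod4 hk, if_pos hk]
    · rw [even_sq_zmod4 hk, if_neg hk]
  rw [h] at hcast
  have h4 : (((4:ℤ)^(q+1) : ℤ) : ZMod 4) = 0 :=
    (ZMod.intCast_zmod_eq_zero_iff_dvd _ 4).2 (by exact_mod_cast dvd_pow_self (4:ℤ) (Nat.succ_ne_zero q))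
  rw [h4] at hcast
  exact (ZMod.natCast_eq_zero_iff _ 4).1 hcast.symm

lemma odd_cast_zmod4 {x : ℤ} (h : Odd x) : (x : ZMod 4) = 1 ∨ (x : ZMod 4) = 3 := by
  obtain ⟨m, hm⟩ := h
  subst hm
  push_cast
  have : ∀ y : ZMod 4, 2*y+1 = 1 ∨ 2*y+1 = 3 := by decide
  exact this _

lemma zmod4_one_imp {x : ℤ} (h : (x : ZMod 4) = 1) : (4:ℤ) ∣ x - 1 := by
  have : ((x - 1 : ℤ) : ZMod 4) = 0 := by push_cast [h]; ring
  exact_mod_cast (ZMod.intCast_zmod_eq_zero_iff_dvd _ 4).1 this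

lemma zmod4_one_odd {x : ℤ} (h : (x : ZMod 4) = 1) : Odd x := by
  obtain ⟨m, hm⟩ := zmod4_one_imp h
  exact ⟨2*m, by linarith⟩


lemma signFix (q : ℕ) (u : Fin n → ℤ) (a : Fin n) (ha : Odd (u a)) :
    ∃ u' : Fin n → ℤ,
      Reaches (fun k => ((u k : ℂ)) / 2^q) (fun k => ((u' k : ℂ)) / 2^q) ∧
      ((u' a : ZMod 4) = 1) ∧ (∀ k, k ≠ a → u' k = u k) ∧ (∀ k, (u' k)^2 = (u k)^2) := by
  rcases odd_cast_zmod4 ha with h1 | h3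
  · exact ⟨u, reaches_refl _, h1, fun k _ => rfl, fun k => rfl⟩
  · refine ⟨Function.update u a (-u a), ?_, ?_, ?_, ?_⟩
    · have := reaches_neg a (fun k => ((u k : ℂ)) / 2^q)
      convert this using 2 with k
      by_cases hk : k = a
      · subst hk; simp [Function.update_self]; push_cast; ring
      · simp [Function.update_of_ne hk, hk]
    · rw [Function.update_self]
      push_cast [h3]
      decide
    · intro k hk; rw [Function.update_of_ne hk]
    · intro k
      by_cases hk : k = a
      · subst hk; rw [Function.update_self]; ring
      · rw [Function.update_of_ne hk]

lemma hh_step (q : ℕ) (u : Fin n → ℤ) (a b c d : Fin n)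
    (hab : a ≠ b) (hac : a ≠ c) (had : a ≠ d) (hbc : b ≠ c) (hbd : b ≠ d) (hcd : c ≠ d)
    (ha : (u a : ZMod 4) = 1) (hb : (u b : ZMod 4) = 1)
    (hc : (u c : ZMod 4) = 1) (hd : (u d : ZMod 4) = 1) :
    ∃ u' : Fin n → ℤ,
      Reaches (fun k => ((u k : ℂ)) / 2^q) (fun k => ((u' k : ℂ)) / 2^q) ∧
      (∀ k, k ≠ a → k ≠ b → k ≠ c → k ≠ d → u' k = u k) ∧
      (¬ Odd (u' a)) ∧ (¬ Odd (u' b)) ∧ (¬ Odd (u' c)) ∧ (¬ Odd (u' d)) ∧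
      (∑ k, (u' k)^2 = ∑ k, (u k)^2) := by
  obtain ⟨α, hα⟩ := zmod4_one_imp ha
  obtain ⟨β, hβ⟩ := zmod4_one_imp hb
  obtain ⟨γ, hγ⟩ := zmod4_one_imp hc
  obtain ⟨δ, hδ⟩ := zmod4_one_imp hd
  have hua : u a = 4*α + 1 := by linarith
  have hub : u b = 4*β + 1 := by linarith
  have huc : u c = 4*γ + 1 := by linarith
  have hud : u d = 4*δ + 1 := by linarith
  set u' : Fin n → ℤ := fun k =>
    if k = a then 2*(α+β+γ+δ)+2
    else if k = b then 2*(α-β+γ-δ)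
    else if k = c then 2*(α+β-γ-δ)
    else if k = d then 2*(α-β-γ+δ)
    else u k with hu'
  have hpow : (2:ℂ)^q ≠ 0 := pow_ne_zero _ two_ne_zero
  refine ⟨u', ?_, ?_, ?_, ?_, ?_, ?_, ?_⟩
  · have := reaches_HH a b c d hab hac had hbc hbd hcd (fun k => ((u k : ℂ)) / 2^q)
    convert this using 2 with k
    by_cases h1 : k = a
    · subst h1
      simp only [hu', if_pos rfl]
      rw [hua, hub, huc, hud]
      push_cast
      field_simp
      ring
    · by_cases h2 : k = b
      · subst h2
        simp only [hu', if_neg h1, if_pos rfl, if_neg (Ne.symm hab)]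
        rw [hua, hub, huc, hud]
        push_cast
        field_simp
        ring
      · by_cases h3 : k = c
        · subst h3
          simp only [hu', if_neg h1, if_neg h2, if_pos rfl, if_neg (Ne.symm hac), if_neg (Ne.symm hbc)]
          rw [hua, hub, huc, hud]
          push_cast
          field_simp
          ring
        · by_cases h4 : k = d
          · subst h4
            simp only [hu', if_neg h1, if_neg h2, if_neg h3, if_pos rfl,
              if_neg (Ne.symm had), if_neg (Ne.symm hbd), if_neg (Ne.symm hcd)]
            rw [hua, hub, huc, hud]
            push_cast
            field_simp
            ring
          · simp only [hu', if_neg h1, if_neg h2, if_neg h3, if_neg h4]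
  · intro k h1 h2 h3 h4; simp only [hu', if_neg h1, if_neg h2, if_neg h3, if_neg h4]
  · have ea : u' a = 2*(α+β+γ+δ)+2 := by simp [hu']
    rw [ea, Int.not_odd_iff_even]; exact ⟨α+β+γ+δ+1, by ring⟩
  · have eb : u' b = 2*(α-β+γ-δ) := by simp [hu', (Ne.symm hab : b ≠ a)]
    rw [eb, Int.not_odd_iff_even]; exact ⟨α-β+γ-δ, by ring⟩
  · have ec : u' c = 2*(α+β-γ-δ) := by simp [hu', (Ne.symm hac : c ≠ a), (Ne.symm hbc : c ≠ b)]
    rw [ec, Int.not_odd_iff_even]; exact ⟨α+β-γ-δ, by ring⟩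
  · have ed : u' d = 2*(α-β-γ+δ) := by
      simp [hu', (Ne.symm had : d ≠ a), (Ne.symm hbd : d ≠ b), (Ne.symm hcd : d ≠ c)]
    rw [ed, Int.not_odd_iff_even]; exact ⟨α-β-γ+δ, by ring⟩
  · -- sum of squares preserved
    have hsub : ({a,b,c,d} : Finset (Fin n)) ⊆ Finset.univ := Finset.subset_univ _
    have key : ∀ w : Fin n → ℤ,
        ∑ k, (w k)^2 = (∑ k ∈ Finset.univ \ ({a,b,c,d} : Finset (Fin n)), (w k)^2) +
          (w a^2 + w b^2 + w c^2 + w d^2) := by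
      intro w
      rw [← Finset.sum_sdiff hsub]
      congr 1
      rw [Finset.sum_insert (by simp [hab, hac, had]),
        Finset.sum_insert (by simp [hbc, hbd]),
        Finset.sum_insert (by simp [hcd]), Finset.sum_singleton]
      ring
    rw [key u', key u]
    congr 1
    · refine Finset.sum_congr rfl fun k hk => ?_
      simp only [Finset.mem_sdiff, Finset.mem_insert, Finset.mem_singleton] at hk
      push_neg at hk
      obtain ⟨-, h1, h2, h3, h4⟩ := hk
      simp only [hu', if_neg h1, if_neg h2, if_neg h3, if_neg h4]
    · have ea : u' a = 2*(α+β+γ+δ)+2 := by simp [hu']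
      have eb : u' b = 2*(α-β+γ-δ) := by simp [hu', (Ne.symm hab : b ≠ a)]
      have ec : u' c = 2*(α+β-γ-δ) := by simp [hu', (Ne.symm hac : c ≠ a), (Ne.symm hbc : c ≠ b)]
      have ed : u' d = 2*(α-β-γ+δ) := by
        simp [hu', (Ne.symm had : d ≠ a), (Ne.symm hbd : d ≠ b), (Ne.symm hcd : d ≠ c)]
      rw [ea, eb, ec, ed, hua, hub, huc, hud]
      ring

lemma even_case (q : ℕ) (j : Fin n) (u : Fin n → ℤ) (h : ∑ k, (u k)^2 = 4^(q+1))
    (hall : ∀ k, ¬ Odd (u k))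
    (ih : ∀ u' : Fin n → ℤ, (∑ k, (u' k)^2 = 4^q) →
      Reaches (fun k => ((u' k : ℂ)) / 2^q) (fun k => if k = j then 1 else 0)) :
    Reaches (fun k => ((u k : ℂ)) / 2^(q+1)) (fun k => if k = j then 1 else 0) := by
  have heven : ∀ k, ∃ m : ℤ, u k = 2 * m := by
    intro k
    rcases Int.even_or_odd (u k) with he | ho
    · obtain ⟨m, hm⟩ := he; exact ⟨m, by linarith⟩
    · exact absurd ho (hall k)
  choose u' hu' using heven
  have hveq : (fun k => ((u k : ℂ)) / 2^(q+1)) = fun k => ((u' k : ℂ)) / 2^q := by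
    funext k
    rw [hu' k]
    push_cast
    rw [pow_succ]
    field_simp
  rw [hveq]
  refine ih u' ?_
  have hsum : ∑ k, (2 * u' k)^2 = 4^(q+1) := by
    rw [← h]; exact Finset.sum_congr rfl fun k _ => by rw [← hu' k]
  have h4 : (4:ℤ) * ∑ k, (u' k)^2 = 4 * 4^q := by
    rw [Finset.mul_sum, ← pow_succ']
    rw [← hsum]
    exact Finset.sum_congr rfl fun k _ => by ring
  exact mul_left_cancel₀ (by norm_num) h4

lemma pick_four {S : Finset (Fin n)} (h4 : 4 ≤ S.card) :
    ∃ a b c d, a ∈ S ∧ b ∈ S ∧ c ∈ S ∧ d ∈ S ∧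
      a ≠ b ∧ a ≠ c ∧ a ≠ d ∧ b ≠ c ∧ b ≠ d ∧ c ≠ d := by
  obtain ⟨a, ha⟩ := Finset.card_pos.1 (by omega : 0 < S.card)
  have h3 : 3 ≤ (S.erase a).card := by rw [Finset.card_erase_of_mem ha]; omega
  obtain ⟨b, hb⟩ := Finset.card_pos.1 (by omega : 0 < (S.erase a).card)
  have h2 : 2 ≤ ((S.erase a).erase b).card := by rw [Finset.card_erase_of_mem hb]; omega
  obtain ⟨c, hc⟩ := Finset.card_pos.1 (by omega : 0 < ((S.erase a).erase b).card)
  have h1 : 1 ≤ (((S.erase a).erase b).erase c).card := by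
    rw [Finset.card_erase_of_mem hc]; omega
  obtain ⟨d, hd⟩ := Finset.card_pos.1 (by omega : 0 < (((S.erase a).erase b).erase c).card)
  simp only [Finset.mem_erase] at hb hc hd
  exact ⟨a, b, c, d, ha, hb.2, hc.2.2, hd.2.2.2,
    fun e => hb.1 e.symm, fun e => hc.2.1 e.symm, fun e => hd.2.2.1 e.symm,
    fun e => hc.1 e.symm, fun e => hd.2.1 e.symm, fun e => hd.1 e.symm⟩

lemma main_lemma (j : Fin n) :
    ∀ q : ℕ, ∀ u : Fin n → ℤ, (∑ k, (u k)^2 = 4^q) →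
      Reaches (fun k => ((u k : ℂ)) / 2^q) (fun k => if k = j then 1 else 0) := by
  intro q
  induction q with
  | zero =>
    intro u h
    have := base_case j u (by simpa using h)
    simpa using this
  | succ q ih =>
    suffices H : ∀ s : ℕ, ∀ u : Fin n → ℤ, ∑ k, (u k)^2 = 4^(q+1) →
        (Finset.univ.filter (fun k => Odd (u k))).card ≤ s →
        Reaches (fun k => ((u k : ℂ)) / 2^(q+1)) (fun k => if k = j then 1 else 0) by
      intro u h
      exact H _ u h le_rfl
    intro s
    induction s with
    | zero =>
      intro u h hcard
      refine even_case q j u h (fun k hk => ?_) ih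
      have hmem : k ∈ Finset.univ.filter (fun k => Odd (u k)) := by simp [hk]
      have := Finset.card_pos.2 ⟨k, hmem⟩
      omega
    | succ s ihs =>
      intro u h hcard
      set S := Finset.univ.filter (fun k => Odd (u k)) with hS
      by_cases h0 : S.card = 0
      · refine even_case q j u h (fun k hk => ?_) ih
        have hmem : k ∈ S := by simp [hS, hk]
        have := Finset.card_pos.2 ⟨k, hmem⟩
        omega
      · have hdvd := card_odd_dvd q u h
        rw [← hS] at hdvd
        have h4 : 4 ≤ S.card := by omega
        obtain ⟨a, b, c, d, haS, hbS, hcS, hdS, hab, hac, had, hbc, hbd, hcd⟩ := pick_four h4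
        have hodd : ∀ x ∈ S, Odd (u x) := fun x hx => (Finset.mem_filter.1 hx).2
        -- sign-fix the four entries
        obtain ⟨u1, r1, ha1, hoff1, hsq1⟩ := signFix (q+1) u a (hodd a haS)
        obtain ⟨u2, r2, hb2, hoff2, hsq2⟩ := signFix (q+1) u1 b (by
          have : u1 b = u b := hoff1 b (Ne.symm hab)
          rw [this]; exact hodd b hbS)
        obtain ⟨u3, r3, hc3, hoff3, hsq3⟩ := signFix (q+1) u2 c (by
          rw [hoff2 c (Ne.symm hbc), hoff1 c (Ne.symm hac)]; exact hodd c hcS)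
        obtain ⟨u4, r4, hd4, hoff4, hsq4⟩ := signFix (q+1) u3 d (by
          rw [hoff3 d (Ne.symm hcd), hoff2 d (Ne.symm hbd), hoff1 d (Ne.symm had)]
          exact hodd d hdS)
        -- all four entries ≡ 1 mod 4 in u4
        have ha4 : (u4 a : ZMod 4) = 1 := by
          rw [hoff4 a had, hoff3 a hac, hoff2 a hab]; exact ha1
        have hb4 : (u4 b : ZMod 4) = 1 := by
          rw [hoff4 b hbd, hoff3 b hbc]; exact hb2
        have hc4 : (u4 c : ZMod 4) = 1 := by
          rw [hoff4 c hcd]; exact hc3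
        -- u4 agrees with u off {a,b,c,d}
        have hoff : ∀ k, k ≠ a → k ≠ b → k ≠ c → k ≠ d → u4 k = u k := by
          intro k h1 h2 h3 h4'
          rw [hoff4 k h4', hoff3 k h3, hoff2 k h2, hoff1 k h1]
        have hsq : ∀ k, (u4 k)^2 = (u k)^2 := by
          intro k; rw [hsq4, hsq3, hsq2, hsq1]
        -- apply HH
        obtain ⟨u5, r5, hoff5, hea, heb, hec, hed, hsum5⟩ :=
          hh_step (q+1) u4 a b c d hab hac had hbc hbd hcd ha4 hb4 hc4 hd4
        have hsum : ∑ k, (u5 k)^2 = 4^(q+1) := by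
          rw [hsum5, Finset.sum_congr rfl fun k _ => hsq k, h]
        -- the odd set shrank
        have hsub : Finset.univ.filter (fun k => Odd (u5 k)) ⊆ S \ {a,b,c,d} := by
          intro k hk
          rw [Finset.mem_filter] at hk
          have hka : k ≠ a := fun e => hea (e ▸ hk.2)
          have hkb : k ≠ b := fun e => heb (e ▸ hk.2)
          have hkc : k ≠ c := fun e => hec (e ▸ hk.2)
          have hkd : k ≠ d := fun e => hed (e ▸ hk.2)
          rw [Finset.mem_sdiff]
          refine ⟨?_, by simp [hka, hkb, hkc, hkd]⟩
          rw [hS, Finset.mem_filter]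
          refine ⟨Finset.mem_univ k, ?_⟩
          have := hoff5 k hka hkb hkc hkd
          rw [this, hoff k hka hkb hkc hkd] at hk
          exact hk.2
        have hcard5 : (Finset.univ.filter (fun k => Odd (u5 k))).card ≤ s := by
          have hsubset4 : ({a,b,c,d} : Finset (Fin n)) ⊆ S := by
            intro x hx
            simp only [Finset.mem_insert, Finset.mem_singleton] at hx
            rcases hx with rfl|rfl|rfl|rfl
            exacts [haS, hbS, hcS, hdS]
          have hcc4 : ({a,b,c,d} : Finset (Fin n)).card = 4 := by
            rw [Finset.card_insert_of_notMem (by simp [hab,hac,had]),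
                Finset.card_insert_of_notMem (by simp [hbc,hbd]),
                Finset.card_insert_of_notMem (by simp [hcd]), Finset.card_singleton]
          have h1 := Finset.card_le_card hsub
          rw [Finset.card_sdiff_of_subset hsubset4, hcc4] at h1
          omega
        exact reaches_trans r1 (reaches_trans r2 (reaches_trans r3 (reaches_trans r4
          (reaches_trans r5 (ihs u5 hsum hcard5)))))

end Aux

/-- Every unit vector over `ℤ[1/2]` can be reduced to any standard basis
vector `e_j` by generators `(-1)_[a]`, `X_[a,b]`, `(H⊗H)_[a,b,c,d]`. -/
theorem stmt8 (n : ℕ) (hn : 1 ≤ n) (j : Fin n) (v : Fin n → ℂ)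
    (hunit : ∑ k, (starRingEnd ℂ) (v k) * v k = 1)
    (hD : ∀ k, IsDyadic (v k)) :
    ∃ L : List (Matrix (Fin n) (Fin n) ℂ),
      (∀ G ∈ L, IsIntGen G) ∧
      L.prod.mulVec v = fun k => if k = j then (1 : ℂ) else 0 := by
  choose u q hu using hD
  set Q : ℕ := Finset.univ.sup q with hQ
  set U : Fin n → ℤ := fun k => u k * 2 ^ (Q - q k) with hU
  have hqQ : ∀ k, q k ≤ Q := fun k => Finset.le_sup (Finset.mem_univ k)
  have hvU : ∀ k, v k = ((U k : ℂ)) / 2 ^ Q := by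
    intro k
    rw [hu k, hU]
    push_cast
    rw [div_eq_div_iff (by norm_num [pow_ne_zero]) (by norm_num [pow_ne_zero])]
    rw [mul_assoc, ← pow_add]
    congr 2
    have := hqQ k
    omega
  have hveq : v = fun k => ((U k : ℂ)) / 2 ^ Q := funext hvU
  have hsum : ∑ k, (U k)^2 = 4^Q := by
    have hC : ∑ k, ((U k : ℂ))^2 / (2:ℂ)^(2*Q) = 1 := by
      rw [← hunit]
      refine Finset.sum_congr rfl fun k _ => ?_
      rw [hvU k]
      rw [map_div₀, map_intCast, map_pow, map_ofNat]
      rw [div_mul_div_comm, ← sq, ← pow_add, two_mul]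
    have h2 : ((∑ k, (U k)^2 : ℤ) : ℂ) = ((4^Q : ℤ) : ℂ) := by
      push_cast
      rw [← Finset.sum_div] at hC
      have hne : ((2:ℂ))^(2*Q) ≠ 0 := pow_ne_zero _ two_ne_zero
      rw [div_eq_one_iff_eq hne] at hC
      rw [hC]
      rw [pow_mul]
      norm_num
    exact_mod_cast h2
  rw [hveq]
  exact main_lemma j Q U hsum
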